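/- arXiv:1411.4718 — 3 statements merged into one kernel-verified Lean document; each statement's English description precedes it below -/
import Mathlib

section
/- Let a ∈ (0,1) and let x, y be real numbers with x² + y² = 1. Then there exists β ∈ [−a/√(1−a²), a/√(1−a²)] with cos(F₁(β)) = x and sin(F₁(β)) = y if and only if x ≥ cos((π/2)(1−a)); moreover, when such β exists it is unique. -/
open Real Set

/-- The argument function `F₁(β)` in the short-time case. -/
noncomputable def F₁ (a β : ℝ) : ℝ :=
  -(β / Real.sqrt (1 + β^2)) * Real.arcsin (Real.sqrt ((1 - a^2) * (1 + β^2))) +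
    Real.arcsin (β * Real.sqrt (1 - a^2) / a)

lemma alg1 {a b s w β A : ℝ} (ha0 : 0 < a) (hb0 : 0 < b) (hs0 : 0 < s) (hw0 : 0 < w)
    (hb2 : b^2 = 1 - a^2) (hs2 : s^2 = 1 + β^2) :
    -(1/s^3) * A + -(β/s) * (1/w * ((1-a^2) * β / (b*s))) + b/(a*w) * a
      = (b*s/w - A)/s^3 := by
  have ha := ha0.ne'
  have hb := hb0.ne'
  have hs := hs0.ne'
  have hw := hw0.ne'
  have hβ : β^2 = s^2 - 1 := by linarith
  have hT : -(β/s) * (1/w * ((1-a^2) * β / (b*s))) = -((1-a^2) * β^2 / (b * (s^2 * w))) := by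
    field_simp
  rw [hT, hβ, ← hb2]
  field_simp
  ring

lemma F₁_deriv_pos {a β : ℝ} (ha0 : 0 < a) (ha1 : a < 1)
    (hβ : (1 - a^2) * β^2 < a^2) :
    ∃ D : ℝ, 0 < D ∧ HasDerivAt (F₁ a) D β := by
  have h1a : (0:ℝ) < 1 - a^2 := by nlinarith
  have h1β : (0:ℝ) < 1 + β^2 := by positivity
  have huin : (0:ℝ) < (1 - a^2) * (1 + β^2) := mul_pos h1a h1β
  obtain ⟨b, hbdef⟩ : ∃ b : ℝ, b = Real.sqrt (1 - a^2) := ⟨_, rfl⟩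
  have hb0 : 0 < b := hbdef ▸ Real.sqrt_pos.2 h1a
  have hb2 : b^2 = 1 - a^2 := hbdef ▸ Real.sq_sqrt (le_of_lt h1a)
  obtain ⟨s, hsdef⟩ : ∃ s : ℝ, s = Real.sqrt (1 + β^2) := ⟨_, rfl⟩
  have hs0 : 0 < s := hsdef ▸ Real.sqrt_pos.2 h1β
  have hs2 : s^2 = 1 + β^2 := hsdef ▸ Real.sq_sqrt (le_of_lt h1β)
  obtain ⟨u, hudef⟩ : ∃ u : ℝ, u = Real.sqrt ((1 - a^2) * (1 + β^2)) := ⟨_, rfl⟩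
  have hu0 : 0 < u := hudef ▸ Real.sqrt_pos.2 huin
  have hu2 : u^2 = (1 - a^2) * (1 + β^2) := hudef ▸ Real.sq_sqrt (le_of_lt huin)
  have hu1 : u < 1 := by nlinarith [hu2, hu0]
  have hub : u = b * s := by
    rw [hudef, hsdef, hbdef, ← Real.sqrt_mul (le_of_lt h1a)]
  obtain ⟨w, hwdef⟩ : ∃ w : ℝ, w = Real.sqrt (1 - u^2) := ⟨_, rfl⟩
  have hw0 : 0 < w := hwdef ▸ Real.sqrt_pos.2 (by nlinarith)
  have hw2 : w^2 = 1 - u^2 := hwdef ▸ Real.sq_sqrt (by nlinarith)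
  -- derivative of s
  have hsd : HasDerivAt (fun x : ℝ => Real.sqrt (1 + x^2)) (β / s) β := by
    have h := (((hasDerivAt_pow 2 β).const_add 1).sqrt (ne_of_gt h1β))
    convert h using 1
    rw [← hsdef]; push_cast; ring
  -- derivative of β / s
  have hgd : HasDerivAt (fun x : ℝ => x / Real.sqrt (1 + x^2)) (1 / s^3) β := by
    have h := (hasDerivAt_id β).div hsd (by rw [← hsdef]; exact ne_of_gt hs0)
    refine h.congr_deriv ?_; symm
    rw [← hsdef]
    have hnum : 1 * s - id β * (β / s) = 1 / s := by
      field_simp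
      simp only [id]; nlinarith [hs2]
    rw [hnum, div_div, hs2]
    rw [show s * (1 + β^2) = s^3 from by nlinarith [hs2]]
  -- derivative of u
  have hud : HasDerivAt (fun x : ℝ => Real.sqrt ((1 - a^2) * (1 + x^2)))
      ((1 - a^2) * β / u) β := by
    have hin : HasDerivAt (fun x : ℝ => (1 - a^2) * (1 + x^2)) ((1 - a^2) * (2 * β)) β := by
      have := ((hasDerivAt_pow 2 β).const_add 1).const_mul (1 - a^2)
      refine this.congr_deriv ?_; symm
      push_cast; ring
    have h := hin.sqrt (ne_of_gt huin)
    convert h using 1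
    rw [← hudef]
    rw [div_eq_div_iff (ne_of_gt hu0) (mul_ne_zero two_ne_zero (ne_of_gt hu0))]
    ring
  -- derivative of arcsin u
  have harcud : HasDerivAt (fun x : ℝ => Real.arcsin (Real.sqrt ((1 - a^2) * (1 + x^2))))
      (1 / w * ((1 - a^2) * β / u)) β := by
    have harc : HasDerivAt Real.arcsin
        (1 / Real.sqrt (1 - Real.sqrt ((1 - a^2) * (1 + β^2)) ^ 2))
        (Real.sqrt ((1 - a^2) * (1 + β^2))) := by
      apply Real.hasDerivAt_arcsin
      · rw [← hudef]; linarith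
      · rw [← hudef]; exact ne_of_lt hu1
    have h := harc.comp β hud
    refine h.congr_deriv ?_; symm
    rw [← hudef, ← hwdef]
  -- derivative of arcsin (x * b / a)
  have hq2 : (β * Real.sqrt (1 - a^2) / a)^2 < 1 := by
    rw [← hbdef]
    have he : (β * b / a)^2 = (1 - a^2) * β^2 / a^2 := by
      rw [div_pow, mul_pow, hb2]; ring
    rw [he, div_lt_one (pow_pos ha0 2)]
    exact hβ
  have habs := abs_lt.mp ((sq_lt_one_iff_abs_lt_one (a := β * Real.sqrt (1 - a^2) / a)).mp hq2)
  have hqlt : β * Real.sqrt (1 - a^2) / a < 1 := habs.2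
  have hqgt : -1 < β * Real.sqrt (1 - a^2) / a := habs.1
  have hW : Real.sqrt (1 - (β * Real.sqrt (1 - a^2) / a)^2) = w / a := by
    rw [← hbdef]
    have h1 : 1 - (β * b / a)^2 = (w / a)^2 := by
      rw [div_pow, div_pow, hw2, hu2, mul_pow, hb2]
      field_simp
      ring
    rw [h1, Real.sqrt_sq (div_nonneg hw0.le ha0.le)]
  have harcqd : HasDerivAt (fun x : ℝ => Real.arcsin (x * Real.sqrt (1 - a^2) / a))
      (b / (a * w) * a) β := by
    have hin : HasDerivAt (fun x : ℝ => x * Real.sqrt (1 - a^2) / a)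
        (Real.sqrt (1 - a^2) / a) β := by
      simpa using ((hasDerivAt_id β).mul_const (Real.sqrt (1 - a^2))).div_const a
    have h := (Real.hasDerivAt_arcsin (ne_of_gt hqgt) (ne_of_lt hqlt)).comp β hin
    refine h.congr_deriv ?_; symm
    rw [hW, ← hbdef]
    field_simp
  -- assemble
  have hD : HasDerivAt (F₁ a)
      (-(1 / s^3) * Real.arcsin u + -(β / s) * (1 / w * ((1 - a^2) * β / u))
        + b / (a * w) * a) β := by
    have h := ((hgd.neg.mul harcud).add harcqd)
    unfold F₁
    refine h.congr_deriv ?_; symm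
    simp only [Pi.neg_apply]; rw [← hsdef, ← hudef]
  refine ⟨_, ?_, hD⟩
  -- positivity
  have key : Real.arcsin u < u / w := by
    have h1 := Real.lt_tan (Real.arcsin_pos.2 hu0) (Real.arcsin_lt_pi_div_two.2 hu1)
    rwa [Real.tan_arcsin, ← hwdef] at h1
  have hform : -(1 / s^3) * Real.arcsin u + -(β / s) * (1 / w * ((1 - a^2) * β / u))
      + b / (a * w) * a = (b * s / w - Real.arcsin u) / s^3 := by
    rw [hub]
    exact alg1 ha0 hb0 hs0 hw0 hb2 hs2
  rw [hform]
  apply div_pos _ (by positivity)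
  rw [← hub]
  linarith [key, div_pos hu0 hw0]

lemma F₁_continuous (a : ℝ) : Continuous (F₁ a) := by
  unfold F₁
  have h1 : Continuous fun β : ℝ => β / Real.sqrt (1 + β^2) :=
    continuous_id.div (by fun_prop) (fun β => by positivity)
  exact ((h1.neg.mul (Real.continuous_arcsin.comp (by fun_prop))).add
    (Real.continuous_arcsin.comp (by fun_prop)))

lemma F₁_odd (a β : ℝ) : F₁ a (-β) = -F₁ a β := by
  simp only [F₁, neg_sq, neg_div, neg_neg, neg_mul, Real.arcsin_neg, neg_add]

lemma F₁_top {a : ℝ} (ha0 : 0 < a) (ha1 : a < 1) :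
    F₁ a (a / Real.sqrt (1 - a^2)) = Real.pi / 2 * (1 - a) := by
  have hb2 : Real.sqrt (1 - a^2) ^ 2 = 1 - a^2 :=
    Real.sq_sqrt (by nlinarith)
  set b := Real.sqrt (1 - a^2) with hbdef
  have hb : 0 < b := Real.sqrt_pos.2 (by nlinarith)
  set c := a / b with hcdef
  have hc2 : 1 + c^2 = (1/b)^2 := by
    field_simp [hcdef]
    rw [hcdef, add_mul, div_pow, div_mul_cancel₀ _ (by positivity)]; nlinarith [hb2]
  have hs : Real.sqrt (1 + c^2) = 1/b := by
    rw [hc2, Real.sqrt_sq (by positivity)]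
  have h1 : (1 - a^2) * (1 + c^2) = 1 := by
    rw [hc2, ← hb2]; field_simp
  have h2 : c / Real.sqrt (1 + c^2) = a := by
    rw [hs, hcdef]; field_simp
  have h3 : c * b / a = 1 := by
    rw [hcdef]; field_simp
  rw [F₁, h1, h2, h3, Real.sqrt_one, Real.arcsin_one]
  ring

lemma F₁_strictMono {a : ℝ} (ha0 : 0 < a) (ha1 : a < 1) :
    StrictMonoOn (F₁ a)
      (Icc (-(a / Real.sqrt (1 - a^2))) (a / Real.sqrt (1 - a^2))) := by
  have h1a : (0:ℝ) < 1 - a^2 := by nlinarith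
  have hb0 : 0 < Real.sqrt (1 - a^2) := Real.sqrt_pos.2 h1a
  have hb2 : Real.sqrt (1 - a^2) ^ 2 = 1 - a^2 := Real.sq_sqrt h1a.le
  apply strictMonoOn_of_deriv_pos (convex_Icc _ _) ((F₁_continuous a).continuousOn)
  intro β hβ
  rw [interior_Icc, mem_Ioo] at hβ
  have h1 : β * Real.sqrt (1 - a^2) < a := by
    have := hβ.2
    rw [lt_div_iff₀ hb0] at this
    linarith
  have h2 : -a < β * Real.sqrt (1 - a^2) := by
    have := hβ.1
    rw [show -(a / Real.sqrt (1 - a^2)) = (-a) / Real.sqrt (1 - a^2) from (neg_div _ _).symm,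
      div_lt_iff₀ hb0] at this
    linarith
  have hβ2 : (1 - a^2) * β^2 < a^2 := by nlinarith [hb2]
  obtain ⟨D, hD, hder⟩ := F₁_deriv_pos ha0 ha1 hβ2
  rw [hder.deriv]
  exact hD


/-- Solvability criterion for the system `cos (F₁ β) = x`, `sin (F₁ β) = y`:
a solution `β ∈ [−a/√(1−a²), a/√(1−a²)]` exists iff `x ≥ cos((π/2)(1−a))`,
and the solution is unique when it exists. -/
theorem F₁_system_solvable (a x y : ℝ) (ha : a ∈ Set.Ioo (0:ℝ) 1) (hxy : x^2 + y^2 = 1) :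
    ((∃ β ∈ Set.Icc (-(a / Real.sqrt (1 - a^2))) (a / Real.sqrt (1 - a^2)),
        Real.cos (F₁ a β) = x ∧ Real.sin (F₁ a β) = y) ↔
      x ≥ Real.cos (Real.pi / 2 * (1 - a))) ∧
    (∀ β₁ ∈ Set.Icc (-(a / Real.sqrt (1 - a^2))) (a / Real.sqrt (1 - a^2)),
      ∀ β₂ ∈ Set.Icc (-(a / Real.sqrt (1 - a^2))) (a / Real.sqrt (1 - a^2)),
        Real.cos (F₁ a β₁) = x → Real.sin (F₁ a β₁) = y →
        Real.cos (F₁ a β₂) = x → Real.sin (F₁ a β₂) = y → β₁ = β₂) := by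
  obtain ⟨ha0, ha1⟩ := ha
  have h1a : (0:ℝ) < 1 - a^2 := by nlinarith
  set c := a / Real.sqrt (1 - a^2) with hcdef
  have hc0 : 0 < c := div_pos ha0 (Real.sqrt_pos.2 h1a)
  set m := Real.pi / 2 * (1 - a) with hmdef
  have hπ := Real.pi_pos
  have hm0 : 0 < m := by
    rw [hmdef]; nlinarith
  have hmlt : m < Real.pi / 2 := by
    rw [hmdef]; nlinarith
  have hmono := F₁_strictMono ha0 ha1
  have htop : F₁ a c = m := F₁_top ha0 ha1
  have hbot : F₁ a (-c) = -m := by rw [F₁_odd, htop]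
  have hmemc : c ∈ Icc (-c) c := ⟨by linarith, le_refl c⟩
  have hmemnc : -c ∈ Icc (-c) c := ⟨le_refl _, by linarith⟩
  have hbound : ∀ β ∈ Icc (-c) c, -m ≤ F₁ a β ∧ F₁ a β ≤ m := by
    intro β hβ
    constructor
    · rw [← hbot]; exact hmono.monotoneOn hmemnc hβ hβ.1
    · rw [← htop]; exact hmono.monotoneOn hβ hmemc hβ.2
  constructor
  · constructor
    · rintro ⟨β, hβ, hcos, hsin⟩
      obtain ⟨hl, hr⟩ := hbound β hβ
      have habs : |F₁ a β| ≤ m := abs_le.2 ⟨hl, hr⟩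
      have : Real.cos m ≤ Real.cos |F₁ a β| :=
        Real.cos_le_cos_of_nonneg_of_le_pi (abs_nonneg _) (by linarith) habs
      rw [Real.cos_abs] at this
      rw [← hcos]
      exact this
    · intro hx
      have hy1 : y^2 ≤ 1 := by nlinarith
      have hyl : -1 ≤ y := by nlinarith
      have hyr : y ≤ 1 := by nlinarith
      have hcosm : 0 < Real.cos m :=
        Real.cos_pos_of_mem_Ioo ⟨by linarith, hmlt⟩
      have hx0 : 0 < x := lt_of_lt_of_le hcosm hx
      have hsinm : 0 ≤ Real.sin m :=
        Real.sin_nonneg_of_nonneg_of_le_pi hm0.le (by linarith)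
      have hsc : Real.sin m ^ 2 + Real.cos m ^ 2 = 1 := Real.sin_sq_add_cos_sq m
      have hy2m : y^2 ≤ Real.sin m ^ 2 := by nlinarith
      have hyle : |y| ≤ Real.sin m := by
        rw [abs_le]
        constructor <;> nlinarith [abs_nonneg y]
      have harcm : Real.arcsin (Real.sin m) = m :=
        Real.arcsin_sin (by linarith) (by linarith)
      have hθu : Real.arcsin y ≤ m := by
        rw [← harcm]
        exact Real.monotone_arcsin (le_trans (le_abs_self y) hyle)
      have hθl : -m ≤ Real.arcsin y := by
        have h1 : -Real.sin m ≤ y := by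
          have := neg_abs_le y
          linarith
        have h2 := Real.monotone_arcsin h1
        rw [Real.arcsin_neg, harcm] at h2
        linarith
      have hsub := intermediate_value_Icc (show -c ≤ c by linarith)
        ((F₁_continuous a).continuousOn)
      have hθmem : Real.arcsin y ∈ Icc (F₁ a (-c)) (F₁ a c) := by
        rw [htop, hbot]; exact ⟨hθl, hθu⟩
      obtain ⟨β, hβ, hFβ⟩ := hsub hθmem
      refine ⟨β, hβ, ?_, ?_⟩
      · rw [hFβ, Real.cos_arcsin]
        rw [show 1 - y^2 = x^2 by linarith, Real.sqrt_sq hx0.le]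
      · rw [hFβ, Real.sin_arcsin hyl hyr]
  · intro β₁ hβ₁ β₂ hβ₂ hc1 hs1 hc2 hs2
    obtain ⟨h1l, h1r⟩ := hbound β₁ hβ₁
    obtain ⟨h2l, h2r⟩ := hbound β₂ hβ₂
    have heq : F₁ a β₁ = F₁ a β₂ := by
      apply Real.injOn_sin ⟨by linarith, by linarith⟩ ⟨by linarith, by linarith⟩
      rw [hs1, hs2]
    exact hmono.injOn hβ₁ hβ₂ heq
end

section
/- Let a ∈ (0,1) and let x, y be real numbers with x² + y² = 1. Then there exists β ∈ [−a/√(1−a²), a/√(1−a²)] with cos(F₂(β)) = x and sin(F₂(β)) = y if and only if x ≥ cos((π/2)(1+a)); moreover, when such β exists it is unique. -/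
open Real Set

noncomputable def F₂ (a β : ℝ) : ℝ :=
  β / Real.sqrt (1 + β^2) * (Real.pi - Real.arcsin (Real.sqrt ((1 - a^2) * (1 + β^2)))) +
    Real.arcsin (β * Real.sqrt (1 - a^2) / a)

lemma F₂_continuous (a : ℝ) : Continuous (F₂ a) := by
  have h1 : Continuous fun β : ℝ => Real.sqrt (1 + β^2) := by fun_prop
  have h2 : ∀ β : ℝ, Real.sqrt (1 + β^2) ≠ 0 := by
    intro β; positivity
  apply Continuous.add
  · exact (continuous_id.div h1 h2).mul
      (continuous_const.sub (Real.continuous_arcsin.comp (by fun_prop)))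
  · exact Real.continuous_arcsin.comp (by fun_prop)

lemma F₂_odd (a β : ℝ) : F₂ a (-β) = -F₂ a β := by
  simp only [F₂, neg_sq, neg_div, neg_mul, Real.arcsin_neg]
  ring

lemma F₂_endpoint {a : ℝ} (ha : a ∈ Set.Ioo (0:ℝ) 1) :
    F₂ a (a / Real.sqrt (1 - a^2)) = Real.pi / 2 * (1 + a) := by
  obtain ⟨ha0, ha1⟩ := ha
  have hs2' : (0:ℝ) < 1 - a^2 := by nlinarith
  have hs : 0 < Real.sqrt (1 - a^2) := Real.sqrt_pos.2 hs2'
  set s := Real.sqrt (1 - a^2) with hsdef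
  have hs2 : s^2 = 1 - a^2 := Real.sq_sqrt hs2'.le
  have hM2 : 1 + (a/s)^2 = 1/s^2 := by
    field_simp
    nlinarith
  have hsqM : Real.sqrt (1 + (a/s)^2) = 1/s := by
    rw [hM2, one_div, Real.sqrt_inv, Real.sqrt_sq hs.le, one_div]
  have h1 : (1 - a^2) * (1 + (a/s)^2) = 1 := by
    rw [hM2, ← hs2]; field_simp
  have h2 : a / s * s / a = 1 := by field_simp
  rw [F₂, hsqM, h1, h2, Real.sqrt_one, Real.arcsin_one]
  have : a / s / (1 / s) = a := by field_simp
  rw [this]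
  ring

lemma F₂_hasDerivAt {a β : ℝ} (ha : a ∈ Set.Ioo (0:ℝ) 1)
    (hβ : β ∈ Set.Ioo (-(a / Real.sqrt (1 - a^2))) (a / Real.sqrt (1 - a^2))) :
    HasDerivAt (F₂ a)
      ((Real.pi - Real.arcsin (Real.sqrt ((1 - a^2) * (1 + β^2)))) / (Real.sqrt (1 + β^2))^3
        + Real.sqrt (1 - a^2) / ((1 + β^2) * Real.sqrt (a^2 - (1 - a^2) * β^2))) β := by
  obtain ⟨ha0, ha1⟩ := ha
  have hs2' : (0:ℝ) < 1 - a^2 := by nlinarith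
  have hs : 0 < Real.sqrt (1 - a^2) := Real.sqrt_pos.2 hs2'
  have hs2 : (Real.sqrt (1 - a^2))^2 = 1 - a^2 := Real.sq_sqrt hs2'.le
  -- β bound
  have hβ2 : (1 - a^2) * β^2 < a^2 := by
    have habs : |β| < a / Real.sqrt (1 - a^2) := abs_lt.2 ⟨hβ.1, hβ.2⟩
    have h1 : β^2 < (a / Real.sqrt (1 - a^2))^2 := by
      rw [← sq_abs]; exact pow_lt_pow_left₀ habs (abs_nonneg _) (by norm_num)
    have h2 : (a / Real.sqrt (1 - a^2))^2 = a^2 / (1 - a^2) := by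
      rw [div_pow, hs2]
    rw [h2] at h1
    calc (1 - a^2) * β^2 < (1 - a^2) * (a^2 / (1 - a^2)) := by
          exact mul_lt_mul_of_pos_left h1 hs2'
      _ = a^2 := by field_simp
  have hu : (0:ℝ) < 1 + β^2 := by positivity
  have hsu : 0 < Real.sqrt (1 + β^2) := Real.sqrt_pos.2 hu
  have hsu2 : (Real.sqrt (1 + β^2))^2 = 1 + β^2 := Real.sq_sqrt hu.le
  have hD : (0:ℝ) < a^2 - (1 - a^2) * β^2 := by linarith
  have hd : 0 < Real.sqrt (a^2 - (1 - a^2) * β^2) := Real.sqrt_pos.2 hD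
  have hd2 : (Real.sqrt (a^2 - (1 - a^2) * β^2))^2 = a^2 - (1 - a^2) * β^2 :=
    Real.sq_sqrt hD.le
  -- h value
  have hharg : (0:ℝ) < (1 - a^2) * (1 + β^2) := by positivity
  have hh2 : (Real.sqrt ((1 - a^2) * (1 + β^2)))^2 = (1 - a^2) * (1 + β^2) :=
    Real.sq_sqrt hharg.le
  have hhlt : Real.sqrt ((1 - a^2) * (1 + β^2)) < 1 := by
    have h := Real.sqrt_lt_sqrt hharg.le (show (1 - a^2) * (1 + β^2) < 1 by nlinarith)
    simpa using h
  have hhne1 : Real.sqrt ((1 - a^2) * (1 + β^2)) ≠ 1 := ne_of_lt hhlt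
  have hhnem1 : Real.sqrt ((1 - a^2) * (1 + β^2)) ≠ -1 :=
    ne_of_gt (lt_of_lt_of_le (by norm_num) (Real.sqrt_nonneg _))
  have h1mh2 : 1 - (Real.sqrt ((1 - a^2) * (1 + β^2)))^2 = a^2 - (1 - a^2) * β^2 := by
    rw [hh2]; ring
  -- last arg
  have hlast2 : (β * Real.sqrt (1 - a^2) / a)^2 < 1 := by
    rw [div_pow, mul_pow, hs2, div_lt_one (by positivity)]
    nlinarith
  have hlastne1 : β * Real.sqrt (1 - a^2) / a ≠ 1 := by
    intro h; rw [h] at hlast2; norm_num at hlast2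
  have hlastnem1 : β * Real.sqrt (1 - a^2) / a ≠ -1 := by
    intro h; rw [h] at hlast2; norm_num at hlast2
  -- derivatives
  have du : HasDerivAt (fun β : ℝ => 1 + β^2) (2*β) β := by
    simpa using (hasDerivAt_pow 2 β).const_add 1
  have dsu : HasDerivAt (fun β : ℝ => Real.sqrt (1 + β^2)) (2*β / (2 * Real.sqrt (1 + β^2))) β :=
    du.sqrt hu.ne'
  have dg : HasDerivAt (fun β : ℝ => β / Real.sqrt (1 + β^2))
      ((1 * Real.sqrt (1 + β^2) - β * (2*β / (2 * Real.sqrt (1 + β^2)))) / (Real.sqrt (1 + β^2))^2) β :=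
    (hasDerivAt_id β).div dsu hsu.ne'
  have dh : HasDerivAt (fun β : ℝ => Real.sqrt ((1 - a^2) * (1 + β^2)))
      ((1 - a^2) * (2*β) / (2 * Real.sqrt ((1 - a^2) * (1 + β^2)))) β :=
    (du.const_mul _).sqrt hharg.ne'
  have darc1 : HasDerivAt (fun β : ℝ => Real.arcsin (Real.sqrt ((1 - a^2) * (1 + β^2))))
      (1 / Real.sqrt (1 - (Real.sqrt ((1 - a^2) * (1 + β^2)))^2)
        * ((1 - a^2) * (2*β) / (2 * Real.sqrt ((1 - a^2) * (1 + β^2))))) β := by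
    have := (Real.hasDerivAt_arcsin hhnem1 hhne1).comp β dh
    simpa [Function.comp_def] using this
  have dlin : HasDerivAt (fun β : ℝ => β * Real.sqrt (1 - a^2) / a)
      (Real.sqrt (1 - a^2) / a) β := by
    have : HasDerivAt (fun β : ℝ => β * (Real.sqrt (1 - a^2) / a))
        (Real.sqrt (1 - a^2) / a) β := by
      simpa using (hasDerivAt_id β).mul_const (Real.sqrt (1 - a^2) / a)
    simpa [mul_div_assoc] using this
  have darc2 : HasDerivAt (fun β : ℝ => Real.arcsin (β * Real.sqrt (1 - a^2) / a))
      (1 / Real.sqrt (1 - (β * Real.sqrt (1 - a^2) / a)^2) * (Real.sqrt (1 - a^2) / a)) β := by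
    have := (Real.hasDerivAt_arcsin hlastnem1 hlastne1).comp β dlin
    simpa [Function.comp_def] using this
  have dprod := dg.mul (darc1.const_sub Real.pi)
  have dall := dprod.add darc2
  have : F₂ a = fun β : ℝ =>
      β / Real.sqrt (1 + β^2) * (Real.pi - Real.arcsin (Real.sqrt ((1 - a^2) * (1 + β^2)))) +
        Real.arcsin (β * Real.sqrt (1 - a^2) / a) := rfl
  rw [this]
  convert dall using 1
  case e'_4 => rfl
  case e'_5 => rfl
  case e'_8 => rfl
  -- algebraic identity
  have hsqmul : Real.sqrt ((1 - a^2) * (1 + β^2)) = Real.sqrt (1 - a^2) * Real.sqrt (1 + β^2) :=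
    Real.sqrt_mul hs2'.le _
  have harcsqrt : Real.sqrt (1 - (Real.sqrt ((1 - a^2) * (1 + β^2)))^2)
      = Real.sqrt (a^2 - (1 - a^2) * β^2) := by rw [h1mh2]
  have hlastsqrt : Real.sqrt (1 - (β * Real.sqrt (1 - a^2) / a)^2)
      = Real.sqrt (a^2 - (1 - a^2) * β^2) / a := by
    rw [div_pow, mul_pow, hs2]
    rw [show 1 - β^2 * (1 - a^2) / a^2 = (a^2 - (1 - a^2) * β^2) / a^2 by field_simp]
    rw [Real.sqrt_div hD.le, Real.sqrt_sq ha0.le]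
  rw [harcsqrt, hlastsqrt, hsqmul]
  set s := Real.sqrt (1 - a^2) with hsdef
  set q := Real.sqrt (1 + β^2) with hqdef
  set d := Real.sqrt (a^2 - (1 - a^2) * β^2) with hddef
  generalize Real.arcsin (s * q) = t
  field_simp
  linear_combination (-((1+β^2)*(Real.pi - t)*s*d) - q*β^2*s^2) * hsu2
    + (-(q*β^2*(1+β^2))) * hs2

lemma F₂_strictMonoOn {a : ℝ} (ha : a ∈ Set.Ioo (0:ℝ) 1) :
    StrictMonoOn (F₂ a)
      (Set.Icc (-(a / Real.sqrt (1 - a^2))) (a / Real.sqrt (1 - a^2))) := by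
  apply strictMonoOn_of_deriv_pos (convex_Icc _ _) (F₂_continuous a).continuousOn
  intro β hβ
  rw [interior_Icc] at hβ
  rw [(F₂_hasDerivAt ha hβ).deriv]
  obtain ⟨ha0, ha1⟩ := ha
  have hs2' : (0:ℝ) < 1 - a^2 := by nlinarith
  have hs : 0 < Real.sqrt (1 - a^2) := Real.sqrt_pos.2 hs2'
  have hs2 : (Real.sqrt (1 - a^2))^2 = 1 - a^2 := Real.sq_sqrt hs2'.le
  have hβ2 : (1 - a^2) * β^2 < a^2 := by
    have habs : |β| < a / Real.sqrt (1 - a^2) := abs_lt.2 ⟨hβ.1, hβ.2⟩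
    have h1 : β^2 < (a / Real.sqrt (1 - a^2))^2 := by
      rw [← sq_abs]; exact pow_lt_pow_left₀ habs (abs_nonneg _) (by norm_num)
    have h2 : (a / Real.sqrt (1 - a^2))^2 = a^2 / (1 - a^2) := by
      rw [div_pow, hs2]
    rw [h2] at h1
    calc (1 - a^2) * β^2 < (1 - a^2) * (a^2 / (1 - a^2)) :=
          mul_lt_mul_of_pos_left h1 hs2'
      _ = a^2 := by field_simp
  have hu : (0:ℝ) < 1 + β^2 := by positivity
  have hsu : 0 < Real.sqrt (1 + β^2) := Real.sqrt_pos.2 hu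
  have hD : (0:ℝ) < a^2 - (1 - a^2) * β^2 := by linarith
  have hd : 0 < Real.sqrt (a^2 - (1 - a^2) * β^2) := Real.sqrt_pos.2 hD
  have harc : Real.arcsin (Real.sqrt ((1 - a^2) * (1 + β^2))) ≤ Real.pi / 2 :=
    Real.arcsin_le_pi_div_two _
  have hπ := Real.pi_pos
  apply add_pos
  · apply div_pos (by linarith) (by positivity)
  · exact div_pos hs (by positivity)

/-- Solvability criterion for the system `cos (F₂ β) = x`, `sin (F₂ β) = y`:
a solution `β ∈ [−a/√(1−a²), a/√(1−a²)]` exists iff `x ≥ cos((π/2)(1+a))`,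
and the solution is unique when it exists. -/
theorem F₂_system_solvable (a x y : ℝ) (ha : a ∈ Set.Ioo (0:ℝ) 1) (hxy : x^2 + y^2 = 1) :
    ((∃ β ∈ Set.Icc (-(a / Real.sqrt (1 - a^2))) (a / Real.sqrt (1 - a^2)),
        Real.cos (F₂ a β) = x ∧ Real.sin (F₂ a β) = y) ↔
      x ≥ Real.cos (Real.pi / 2 * (1 + a))) ∧
    (∀ β₁ ∈ Set.Icc (-(a / Real.sqrt (1 - a^2))) (a / Real.sqrt (1 - a^2)),
      ∀ β₂ ∈ Set.Icc (-(a / Real.sqrt (1 - a^2))) (a / Real.sqrt (1 - a^2)),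
        Real.cos (F₂ a β₁) = x → Real.sin (F₂ a β₁) = y →
        Real.cos (F₂ a β₂) = x → Real.sin (F₂ a β₂) = y → β₁ = β₂) := by
  obtain ⟨ha0, ha1⟩ := ha
  have hs2' : (0:ℝ) < 1 - a^2 := by nlinarith
  have hs : 0 < Real.sqrt (1 - a^2) := Real.sqrt_pos.2 hs2'
  set M := a / Real.sqrt (1 - a^2) with hMdef
  have hM : 0 < M := by positivity
  set c := Real.pi / 2 * (1 + a) with hcdef
  have hπ := Real.pi_pos
  have hc0 : 0 < c := by positivity
  have hcπ : c < Real.pi := by rw [hcdef]; nlinarith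
  have hFM : F₂ a M = c := F₂_endpoint ⟨ha0, ha1⟩
  have hFmM : F₂ a (-M) = -c := by rw [F₂_odd, hFM]
  have mono := F₂_strictMonoOn (a := a) ⟨ha0, ha1⟩
  have hmMmem : -M ∈ Set.Icc (-M) M := ⟨le_refl _, by linarith⟩
  have hMmem : M ∈ Set.Icc (-M) M := ⟨by linarith, le_refl _⟩
  -- range bound
  have hrange : ∀ β ∈ Set.Icc (-M) M, F₂ a β ∈ Set.Icc (-c) c := by
    intro β hβ
    constructor
    · rw [← hFmM]; exact mono.monotoneOn hmMmem hβ hβ.1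
    · rw [← hFM]; exact mono.monotoneOn hβ hMmem hβ.2
  constructor
  · constructor
    · rintro ⟨β, hβ, hcos, -⟩
      have hθ := hrange β hβ
      have habs : |F₂ a β| ≤ c := abs_le.2 ⟨hθ.1, hθ.2⟩
      have := Real.cos_le_cos_of_nonneg_of_le_pi (abs_nonneg (F₂ a β)) hcπ.le habs
      rw [Real.cos_abs] at this
      rw [← hcos]; exact this
    · intro hx
      have hx1 : -1 ≤ x ∧ x ≤ 1 := by
        constructor <;> nlinarith [sq_nonneg (x-1), sq_nonneg (x+1), sq_nonneg y]
      set θ := if 0 ≤ y then Real.arccos x else -Real.arccos x with hθdef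
      have hcosθ : Real.cos θ = x := by
        rw [hθdef]; split
        · exact Real.cos_arccos hx1.1 hx1.2
        · rw [Real.cos_neg]; exact Real.cos_arccos hx1.1 hx1.2
      have hsinθ : Real.sin θ = y := by
        have hsa : Real.sin (Real.arccos x) = |y| := by
          rw [Real.sin_arccos]
          rw [show 1 - x^2 = y^2 by nlinarith]
          exact Real.sqrt_sq_eq_abs y
        rw [hθdef]; split
        · rw [hsa]; exact abs_of_nonneg (by assumption)
        · rw [Real.sin_neg, hsa]; rw [abs_of_neg (by linarith [not_le.1 (by assumption : ¬ 0 ≤ y)])]; ring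
      have harc : Real.arccos x ≤ c := by
        have hcc : Real.arccos (Real.cos c) = c := Real.arccos_cos hc0.le hcπ.le
        rcases eq_or_lt_of_le hx with h | h
        · rw [← h, hcc]
        · have := Real.strictAntiOn_arccos
            ⟨Real.neg_one_le_cos c, Real.cos_le_one c⟩ ⟨hx1.1, hx1.2⟩ h
          rw [hcc] at this; exact this.le
      have hθmem : θ ∈ Set.Icc (-c) c := by
        have h0 := Real.arccos_nonneg x
        rw [hθdef]; split
        · exact ⟨by linarith, harc⟩
        · exact ⟨by linarith, by linarith⟩
      have hsurj := intermediate_value_Icc (show -M ≤ M by linarith)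
        ((F₂_continuous a).continuousOn)
      rw [hFmM, hFM] at hsurj
      obtain ⟨β, hβmem, hβeq⟩ := hsurj hθmem
      exact ⟨β, hβmem, by rw [hβeq, hcosθ], by rw [hβeq, hsinθ]⟩
  · intro β₁ hβ₁ β₂ hβ₂ hc1 hs1 hc2 hs2
    have hθ₁ := hrange β₁ hβ₁
    have hθ₂ := hrange β₂ hβ₂
    have hcoseq : Real.cos (F₂ a β₁) = Real.cos (F₂ a β₂) := by rw [hc1, hc2]
    have hsineq : Real.sin (F₂ a β₁) = Real.sin (F₂ a β₂) := by rw [hs1, hs2]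
    have habs : |F₂ a β₁| = |F₂ a β₂| := by
      apply Real.injOn_cos
      · exact ⟨abs_nonneg _, le_trans (abs_le.2 ⟨hθ₁.1, hθ₁.2⟩) hcπ.le⟩
      · exact ⟨abs_nonneg _, le_trans (abs_le.2 ⟨hθ₂.1, hθ₂.2⟩) hcπ.le⟩
      · rw [Real.cos_abs, Real.cos_abs, hcoseq]
    have hθeq : F₂ a β₁ = F₂ a β₂ := by
      rcases abs_eq_abs.1 habs with h | h
      · exact h
      · have hsin2 : Real.sin (F₂ a β₂) = 0 := by
          have h' : Real.sin (F₂ a β₁) = -Real.sin (F₂ a β₂) := by rw [h, Real.sin_neg]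
          linarith [hsineq, h']
        have h2π : -Real.pi < F₂ a β₂ ∧ F₂ a β₂ < Real.pi := by
          constructor <;> [linarith [hθ₂.1]; linarith [hθ₂.2]]
        have : F₂ a β₂ = 0 := (Real.sin_eq_zero_iff_of_lt_of_lt h2π.1 h2π.2).1 hsin2
        rw [h, this]; ring
    exact mono.injOn hβ₁ hβ₂ hθeq
end

section
/- Let a ∈ (0,1) and let β lie in the open interval (−a/√(1−a²), a/√(1−a²)). Set z = √((1−a²)(1+β²)), so z ∈ [√(1−a²), 1). Then F₁ is differentiable at β and F₁'(β) = (z − √(1−z²)·arcsin z) / ((1+β²)^{3/2}·√(1−z²)). -/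
set_option maxHeartbeats 1000000


open Real Set

/-- Derivative formula for `F₁` in the interior of its domain. -/
theorem F₁_hasDerivAt (a β z : ℝ) (ha : a ∈ Set.Ioo (0:ℝ) 1)
    (hβ : β ∈ Set.Ioo (-(a / Real.sqrt (1 - a^2))) (a / Real.sqrt (1 - a^2)))
    (hz : z = Real.sqrt ((1 - a^2) * (1 + β^2))) :
    z ∈ Set.Ico (Real.sqrt (1 - a^2)) 1 ∧
    HasDerivAt (F₁ a)
      ((z - Real.sqrt (1 - z^2) * Real.arcsin z) /
        ((1 + β^2) ^ ((3:ℝ)/2) * Real.sqrt (1 - z^2))) β := by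
  obtain ⟨ha0, ha1⟩ := ha
  obtain ⟨hβl, hβr⟩ := hβ
  have hc : 0 < 1 - a^2 := by nlinarith
  have hsc : 0 < Real.sqrt (1 - a^2) := Real.sqrt_pos.mpr hc
  have hscsq : (Real.sqrt (1 - a^2))^2 = 1 - a^2 := Real.sq_sqrt hc.le
  have hb2 : 0 < 1 + β^2 := by positivity
  have hS : 0 < Real.sqrt (1 + β^2) := Real.sqrt_pos.mpr hb2
  have hSsq : (Real.sqrt (1 + β^2))^2 = 1 + β^2 := Real.sq_sqrt hb2.le
  -- key bound
  have habs : |β| * Real.sqrt (1 - a^2) < a := by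
    rw [← lt_div_iff₀ hsc]
    exact abs_lt.mpr ⟨hβl, hβr⟩
  have hu2 : (|β| * Real.sqrt (1 - a^2))^2 = (1 - a^2) * β^2 := by
    rw [mul_pow, sq_abs, hscsq]; ring
  have hcb : (1 - a^2) * β^2 < a^2 := by
    nlinarith [habs, hu2, abs_nonneg β, hsc.le, mul_nonneg (abs_nonneg β) hsc.le]
  have hz2 : z^2 = (1 - a^2) * (1 + β^2) := by
    rw [hz, Real.sq_sqrt (by positivity)]
  have hz0 : 0 ≤ z := hz ▸ Real.sqrt_nonneg _
  have hz1 : z < 1 := by nlinarith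
  have h1z : 0 < 1 - z^2 := by nlinarith
  have hQ : 0 < Real.sqrt (1 - z^2) := Real.sqrt_pos.mpr h1z
  have hQsq : (Real.sqrt (1 - z^2))^2 = 1 - z^2 := Real.sq_sqrt h1z.le
  have hzcs : z = Real.sqrt (1 - a^2) * Real.sqrt (1 + β^2) := by
    rw [hz, Real.sqrt_mul hc.le]
  have hmem : z ∈ Set.Ico (Real.sqrt (1 - a^2)) 1 := by
    constructor
    · rw [hz]
      apply Real.sqrt_le_sqrt
      nlinarith
    · exact hz1
  refine ⟨hmem, ?_⟩
  -- derivative pieces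
  have hd1 : HasDerivAt (fun x : ℝ => 1 + x^2) (2*β) β := by
    simpa using (hasDerivAt_pow 2 β).const_add 1
  have hdsqrt : HasDerivAt (fun x : ℝ => Real.sqrt (1 + x^2))
      (2*β / (2 * Real.sqrt (1 + β^2))) β := hd1.sqrt (by positivity)
  have hdg : HasDerivAt (fun x : ℝ => x / Real.sqrt (1 + x^2))
      ((1 * Real.sqrt (1+β^2) - β * (2*β / (2*Real.sqrt (1+β^2)))) / (Real.sqrt (1+β^2))^2) β :=
    (hasDerivAt_id β).div hdsqrt (ne_of_gt hS)
  have hdzfun : HasDerivAt (fun x : ℝ => Real.sqrt ((1-a^2)*(1+x^2)))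
      ((1-a^2)*(2*β) / (2 * z)) β := by
    rw [hz]
    exact (hd1.const_mul (1-a^2)).sqrt (by positivity)
  have hzne1 : Real.sqrt ((1-a^2)*(1+β^2)) ≠ 1 := by rw [← hz]; exact ne_of_lt hz1
  have hznem1 : Real.sqrt ((1-a^2)*(1+β^2)) ≠ -1 := by
    rw [← hz]; intro h; rw [h] at hz0; linarith
  have hdA1 : HasDerivAt (fun x : ℝ => Real.arcsin (Real.sqrt ((1-a^2)*(1+x^2))))
      ((1 / Real.sqrt (1 - z^2)) * ((1-a^2)*(2*β) / (2 * z))) β := by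
    have := (Real.hasDerivAt_arcsin hznem1 hzne1).comp β hdzfun
    rw [← hz] at this
    exact this
  -- second arcsin
  have hane : a ≠ 0 := ne_of_gt ha0
  have hlin : HasDerivAt (fun x : ℝ => x * Real.sqrt (1 - a^2) / a)
      (1 * Real.sqrt (1 - a^2) / a) β :=
    ((hasDerivAt_id β).mul_const _).div_const a
  have harg2 : (β * Real.sqrt (1 - a^2) / a)^2 < 1 := by
    rw [div_pow, mul_pow, hscsq, div_lt_one (by positivity)]
    nlinarith
  have hargne1 : β * Real.sqrt (1 - a^2) / a ≠ 1 := by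
    intro h; rw [h] at harg2; norm_num at harg2
  have hargnem1 : β * Real.sqrt (1 - a^2) / a ≠ -1 := by
    intro h; rw [h] at harg2; norm_num at harg2
  have hq2 : Real.sqrt (1 - (β * Real.sqrt (1 - a^2) / a)^2) = Real.sqrt (1 - z^2) / a := by
    have h1 : 1 - (β * Real.sqrt (1 - a^2) / a)^2 = (1 - z^2) / a^2 := by
      rw [div_pow, mul_pow, hscsq, hz2]
      field_simp
      ring
    rw [h1, Real.sqrt_div h1z.le, Real.sqrt_sq ha0.le]
  have hdA2 : HasDerivAt (fun x : ℝ => Real.arcsin (x * Real.sqrt (1 - a^2) / a))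
      ((1 / (Real.sqrt (1 - z^2) / a)) * (1 * Real.sqrt (1 - a^2) / a)) β := by
    have := (Real.hasDerivAt_arcsin hargnem1 hargne1).comp β hlin
    rw [hq2] at this
    exact this
  -- total
  have hdF : HasDerivAt (F₁ a)
      (-((1 * Real.sqrt (1+β^2) - β * (2*β / (2*Real.sqrt (1+β^2)))) / (Real.sqrt (1+β^2))^2) *
        Real.arcsin (Real.sqrt ((1-a^2)*(1+β^2))) +
       -(β / Real.sqrt (1+β^2)) * ((1 / Real.sqrt (1 - z^2)) * ((1-a^2)*(2*β) / (2 * z))) +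
       (1 / (Real.sqrt (1 - z^2) / a)) * (1 * Real.sqrt (1 - a^2) / a)) β := by
    exact ((hdg.neg.mul hdA1).add hdA2)
  convert hdF using 1
  rw [← hz]
  have hrpow : (1 + β^2) ^ ((3:ℝ)/2) = Real.sqrt (1+β^2) ^ 3 := by
    rw [Real.sqrt_eq_rpow, ← Real.rpow_natCast ((1+β^2) ^ ((1:ℝ)/2)) 3, ← Real.rpow_mul hb2.le]
    norm_num
  rw [hrpow]
  have hzpos : 0 < z := by rw [hzcs]; positivity
  have hSne := hS.ne'
  have hQne := hQ.ne'
  have hzne := hzpos.ne'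
  have hane' : a ≠ 0 := hane
  have hQ2 : (Real.sqrt (1 - z^2))^2 = a^2 - (1 - a^2) * β^2 := by
    rw [hQsq, hz2]; ring
  field_simp
  linear_combination (z * Real.sqrt (1 - z^2) * Real.arcsin z - (Real.sqrt (1 - a^2))^2 * (Real.sqrt (1 + β^2))^2) * hSsq + (z + Real.sqrt (1 - a^2) * Real.sqrt (1 + β^2) - Real.sqrt (1 - a^2) * (Real.sqrt (1 + β^2))^3) * hzcs - (Real.sqrt (1 + β^2))^2 * β^2 * hscsq
end
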